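/- arXiv:1003.5301 — 2 statements merged into one kernel-verified Lean document; each statement's English description precedes it below -/
import Mathlib

section
/- Let F(X) = ∑_{n≥0} Dyck_n(d)·Xⁿ ∈ ℚ[[X]]. Then (3 - 2F)²·(1-X) = 1-5X as formal power series; that is, F = 3/2 - (1/2)·√((1-5X)/(1-X)) is the branch with constant term 1. -/
/-- A step of a Dyck path: up `(1,1)` or down `(1,-1)`. -/
inductive DStep : Type
  | up : DStep
  | down : DStep
  deriving DecidableEq

instance : Fintype DStep := ⟨{DStep.up, DStep.down}, fun x => by cases x <;> simp⟩

/-- The vertical displacement of a Dyck step. -/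
def DStep.val : DStep → ℤ
  | .up => 1
  | .down => -1

/-- The height of the path after its first `k` steps. -/
def dHeight (l : List DStep) (k : ℕ) : ℤ := ((l.take k).map DStep.val).sum

/-- A list of steps is a Dyck path if it never goes below the x-axis and ends at height 0. -/
def IsDyck (l : List DStep) : Prop :=
  (∀ k : ℕ, 0 ≤ dHeight l k) ∧ dHeight l l.length = 0

/-- The weight of a Dyck path w.r.t. `c`: a factor `c i` for every down step of height `i`
(the height of a step being the `y`-coordinate of its ending point). -/
def dWeight (c : ℕ → ℚ) (l : List DStep) : ℚ :=
  ∏ i ∈ Finset.range l.length,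
    match l.getD i DStep.up with
    | .up => 1
    | .down => c (dHeight l (i + 1)).toNat

open Classical in
/-- `Dyck_n(c)`: the sum of the weights of all Dyck paths of length `2n`. -/
noncomputable def dyckSum (n : ℕ) (c : ℕ → ℚ) : ℚ :=
  ∑ f : Fin (2 * n) → DStep,
    if IsDyck (List.ofFn f) then dWeight c (List.ofFn f) else 0

/-- Fibonacci numbers extended to all integer indices:
`fibZ 0 = 0`, `fibZ 1 = 1`, `fibZ m = fibZ (m-1) + fibZ (m-2)` (so `fibZ (-1) = 1`). -/
def fibZ : ℤ → ℤ
  | Int.ofNat n => Nat.fib n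
  | Int.negSucc n => (-1) ^ n * Nat.fib (n + 1)



section DyckAux
open PowerSeries

/- ## auxiliary path machinery -/

lemma dHeight_zero (l : List DStep) : dHeight l 0 = 0 := rfl

lemma dHeight_nil (k : ℕ) : dHeight [] k = 0 := by simp [dHeight]

lemma dHeight_cons (a : DStep) (l : List DStep) (k : ℕ) :
    dHeight (a :: l) (k + 1) = a.val + dHeight l k := by
  simp [dHeight]

def validFrom (h : ℕ) (l : List DStep) : Prop :=
  (∀ k : ℕ, 0 ≤ (h : ℤ) + dHeight l k) ∧ (h : ℤ) + dHeight l l.length = 0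

def wgtFrom (c : ℕ → ℚ) (h : ℕ) (l : List DStep) : ℚ :=
  ∏ i ∈ Finset.range l.length,
    if l.getD i DStep.up = DStep.up then 1 else c ((h : ℤ) + dHeight l (i + 1)).toNat

lemma validFrom_up (h : ℕ) (l : List DStep) :
    validFrom h (DStep.up :: l) ↔ validFrom (h + 1) l := by
  constructor
  · rintro ⟨H1, H2⟩
    refine ⟨fun k => ?_, ?_⟩
    · have := H1 (k + 1); rw [dHeight_cons] at this
      simp only [DStep.val] at this; push_cast; linarith
    · have := H2; simp only [List.length_cons, dHeight_cons, DStep.val] at this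
      push_cast; linarith
  · rintro ⟨H1, H2⟩
    refine ⟨fun k => ?_, ?_⟩
    · cases k with
      | zero => simp [dHeight_zero]; try positivity
      | succ k => rw [dHeight_cons]; have := H1 k; simp only [DStep.val]; push_cast at this ⊢; linarith
    · simp only [List.length_cons, dHeight_cons, DStep.val]
      push_cast at H2 ⊢; linarith

lemma validFrom_down (h : ℕ) (l : List DStep) :
    validFrom (h + 1) (DStep.down :: l) ↔ validFrom h l := by
  constructor
  · rintro ⟨H1, H2⟩
    refine ⟨fun k => ?_, ?_⟩
    · have := H1 (k + 1); rw [dHeight_cons] at this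
      simp only [DStep.val] at this; push_cast at this ⊢; linarith
    · have := H2; simp only [List.length_cons, dHeight_cons, DStep.val] at this
      push_cast at this ⊢; linarith
  · rintro ⟨H1, H2⟩
    refine ⟨fun k => ?_, ?_⟩
    · cases k with
      | zero => simp [dHeight_zero]; try positivity
      | succ k => rw [dHeight_cons]; have := H1 k; simp only [DStep.val]; push_cast at this ⊢; linarith
    · simp only [List.length_cons, dHeight_cons, DStep.val]
      push_cast at H2 ⊢; linarith

lemma not_validFrom_down_zero (l : List DStep) : ¬ validFrom 0 (DStep.down :: l) := by
  rintro ⟨H1, _⟩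
  have := H1 1
  rw [dHeight_cons] at this
  simp [DStep.val, dHeight_zero] at this

lemma wgtFrom_up (c : ℕ → ℚ) (h : ℕ) (l : List DStep) :
    wgtFrom c h (DStep.up :: l) = wgtFrom c (h + 1) l := by
  unfold wgtFrom
  rw [List.length_cons, Finset.prod_range_succ']
  rw [if_pos (by simp : (DStep.up :: l).getD 0 DStep.up = DStep.up), mul_one]
  refine Finset.prod_congr rfl fun i _ => ?_
  have hg : (DStep.up :: l).getD (i + 1) DStep.up = l.getD i DStep.up := by
    simp [List.getD_cons_succ]
  rw [hg]
  by_cases hv : l.getD i DStep.up = DStep.up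
  · rw [if_pos hv, if_pos hv]
  · rw [if_neg hv, if_neg hv]
    congr 1
    rw [dHeight_cons]
    simp only [DStep.val]
    push_cast
    ring_nf

lemma wgtFrom_down (c : ℕ → ℚ) (h : ℕ) (l : List DStep) :
    wgtFrom c (h + 1) (DStep.down :: l) = c h * wgtFrom c h l := by
  unfold wgtFrom
  rw [List.length_cons, Finset.prod_range_succ']
  have hg0 : (DStep.down :: l).getD 0 DStep.up = DStep.down := by simp
  rw [if_neg (by rw [hg0]; decide)]
  have harg : (((h+1 : ℕ) : ℤ) + dHeight (DStep.down :: l) (0 + 1)).toNat = h := by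
    rw [dHeight_cons]
    simp [DStep.val, dHeight_zero]
  rw [harg, mul_comm]
  congr 1
  refine Finset.prod_congr rfl fun i _ => ?_
  have hg : (DStep.down :: l).getD (i + 1) DStep.up = l.getD i DStep.up := by
    simp [List.getD_cons_succ]
  rw [hg]
  by_cases hv : l.getD i DStep.up = DStep.up
  · rw [if_pos hv, if_pos hv]
  · rw [if_neg hv, if_neg hv]
    congr 1
    rw [dHeight_cons]
    simp only [DStep.val]
    push_cast
    ring_nf

open Classical in
noncomputable def Ssum (c : ℕ → ℚ) (h n : ℕ) : ℚ :=
  ∑ f : Fin n → DStep,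
    if validFrom h (List.ofFn f) then wgtFrom c h (List.ofFn f) else 0

lemma DStep.sum_univ (f : DStep → ℚ) : ∑ a, f a = f .up + f .down := by
  have : (Finset.univ : Finset DStep) = {DStep.up, DStep.down} := by decide
  rw [this, Finset.sum_insert (by decide), Finset.sum_singleton]

lemma Ssum_zero (c : ℕ → ℚ) (h : ℕ) : Ssum c h 0 = if h = 0 then 1 else 0 := by
  classical
  unfold Ssum
  haveI : Subsingleton (Fin 0 → DStep) := ⟨fun a b => funext fun i => i.elim0⟩
  rw [Fintype.sum_subsingleton _ (fun i : Fin 0 => i.elim0)]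
  have hofn : List.ofFn (fun i : Fin 0 => i.elim0 (α := DStep)) = [] := by simp
  rw [hofn]
  have hv : validFrom h [] ↔ h = 0 := by
    unfold validFrom
    simp [dHeight_nil]
  have hw : wgtFrom c h [] = 1 := by simp [wgtFrom]
  by_cases h0 : h = 0
  · rw [if_pos (hv.mpr h0), hw, if_pos h0]
  · rw [if_neg (fun hh => h0 (hv.mp hh)), if_neg h0]

lemma Ssum_succ (c : ℕ → ℚ) (h n : ℕ) :
    Ssum c h (n + 1) =
      Ssum c (h + 1) n + (if h = 0 then 0 else c (h - 1) * Ssum c (h - 1) n) := by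
  classical
  unfold Ssum
  rw [← Equiv.sum_comp (Fin.consEquiv (fun _ : Fin (n+1) => DStep))]
  rw [Fintype.sum_prod_type]
  have hofn : ∀ (a : DStep) (g : Fin n → DStep),
      List.ofFn ((Fin.consEquiv (fun _ : Fin (n+1) => DStep)) (a, g)) = a :: List.ofFn g := by
    intro a g
    rw [List.ofFn_succ]
    simp [Fin.consEquiv]
  rw [DStep.sum_univ (fun a => ∑ g : Fin n → DStep, _)]
  simp only [hofn]
  congr 1
  · refine Finset.sum_congr rfl fun g _ => ?_
    by_cases hv : validFrom (h+1) (List.ofFn g)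
    · rw [if_pos ((validFrom_up h (List.ofFn g)).mpr hv), if_pos hv, wgtFrom_up]
    · rw [if_neg (fun hh => hv ((validFrom_up h (List.ofFn g)).mp hh)), if_neg hv]
  · cases h with
    | zero =>
        rw [if_pos rfl]
        refine Finset.sum_eq_zero fun g _ => ?_
        rw [if_neg (not_validFrom_down_zero (List.ofFn g))]
    | succ h' =>
        rw [if_neg (Nat.succ_ne_zero h'), Finset.mul_sum]
        refine Finset.sum_congr rfl fun g _ => ?_
        simp only [Nat.add_sub_cancel]
        by_cases hv : validFrom h' (List.ofFn g)
        · rw [if_pos ((validFrom_down h' (List.ofFn g)).mpr hv), if_pos hv, wgtFrom_down]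
        · rw [if_neg (fun hh => hv ((validFrom_down h' (List.ofFn g)).mp hh)), if_neg hv,
            mul_zero]

lemma Ssum_eq_zero_of_lt (c : ℕ → ℚ) : ∀ n h, n < h → Ssum c h n = 0 := by
  intro n
  induction n with
  | zero => intro h hh; rw [Ssum_zero, if_neg (by omega)]
  | succ n ih =>
      intro h hh
      rw [Ssum_succ, ih (h+1) (by omega)]
      rcases Nat.eq_zero_or_pos h with h0 | h0
      · omega
      · rw [if_neg (by omega), ih (h-1) (by omega), mul_zero, add_zero]

lemma dyckSum_eq_Ssum (c : ℕ → ℚ) (n : ℕ) : dyckSum n c = Ssum c 0 (2 * n) := by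
  classical
  unfold dyckSum Ssum
  refine Finset.sum_congr rfl fun f _ => ?_
  have hv : IsDyck (List.ofFn f) ↔ validFrom 0 (List.ofFn f) := by
    unfold IsDyck validFrom; simp
  have hw : dWeight c (List.ofFn f) = wgtFrom c 0 (List.ofFn f) := by
    unfold dWeight wgtFrom
    refine Finset.prod_congr rfl fun i _ => ?_
    cases hv : (List.ofFn f).getD i DStep.up with
    | up => simp
    | down => simp
  rw [if_congr hv hw rfl]

lemma Ssum_two_step (c : ℕ → ℚ) (j k : ℕ) :
    Ssum c (2*j+2) (k+2) =
      Ssum c (2*j+4) k + (c (2*j+2) + c (2*j+1)) * Ssum c (2*j+2) k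
        + (c (2*j+1) * c (2*j)) * Ssum c (2*j) k := by
  rw [Ssum_succ]
  rw [if_neg (by omega)]
  have e1 : 2*j+2-1 = 2*j+1 := by omega
  rw [e1, Ssum_succ, Ssum_succ]
  rw [if_neg (by omega), if_neg (by omega)]
  have e2 : 2*j+1+1 = 2*j+2 := by omega
  have e3 : 2*j+1-1 = 2*j := by omega
  have e4 : 2*j+2+1+1 = 2*j+4 := by omega
  have e5 : 2*j+2+1-1 = 2*j+2 := by omega
  rw [e2, e3, e4, e5]
  ring

lemma Ssum_zero_two_step (c : ℕ → ℚ) (k : ℕ) :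
    Ssum c 0 (k+2) = Ssum c 2 k + c 0 * Ssum c 0 k := by
  rw [Ssum_succ, if_pos rfl, add_zero, Ssum_succ, if_neg (by omega)]
  try norm_num


/-- Coefficients of `G = sqrt((1-5X)/(1-X))`, the branch with `G(0)=1`. -/
def gcoef : ℕ → ℚ
  | 0 => 1
  | (n+1) => -2 - (1/2) * ∑ i ∈ (Finset.range n).attach, gcoef (i.1 + 1) * gcoef (n - i.1)
decreasing_by
  · have := i.2; rw [Finset.mem_range] at this; omega
  · have := i.2; rw [Finset.mem_range] at this; omega

noncomputable def Gser : ℚ⟦X⟧ := PowerSeries.mk gcoef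

lemma Gser_coeff (n : ℕ) : (coeff n) Gser = gcoef n := by simp [Gser]

lemma Gser_constantCoeff : constantCoeff Gser = 1 := by
  have := Gser_coeff 0
  rw [coeff_zero_eq_constantCoeff] at this
  rw [this]; simp [gcoef]

lemma Gser_sq_coeff (n : ℕ) : (coeff n) (Gser * Gser) = if n = 0 then 1 else -4 := by
  rw [coeff_mul, Finset.Nat.sum_antidiagonal_eq_sum_range_succ_mk]
  cases n with
  | zero => simp [Gser_coeff, gcoef]
  | succ n =>
      rw [if_neg (Nat.succ_ne_zero n)]
      simp only [Gser_coeff]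
      rw [Finset.sum_range_succ, Finset.sum_range_succ']
      have h1 : ∀ i ∈ Finset.range n, gcoef (i+1) * gcoef (n+1-(i+1)) = gcoef (i+1) * gcoef (n-i) := by
        intro i hi
        congr 2
        omega
      rw [Finset.sum_congr rfl h1]
      have h2 : gcoef (n+1) = -2 - (1/2) * ∑ i ∈ Finset.range n, gcoef (i + 1) * gcoef (n - i) := by
        rw [gcoef]
        rw [Finset.sum_attach (Finset.range n) (fun i => gcoef (i + 1) * gcoef (n - i))]
      have h3 : gcoef 0 = 1 := by simp [gcoef]
      rw [h3]
      set s := ∑ i ∈ Finset.range n, gcoef (i + 1) * gcoef (n - i) with hs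
      have h4 : n + 1 - 0 = n + 1 := by omega
      rw [h4, h2]
      rw [show n + 1 - (n + 1) = 0 from by omega, h3]
      ring

lemma coeff_one_sub_five_X (n : ℕ) :
    (coeff n) (1 - 5 * X : ℚ⟦X⟧) = if n = 0 then 1 else if n = 1 then -5 else 0 := by
  have h5 : (5 : ℚ⟦X⟧) = C 5 := (map_ofNat (C) 5).symm
  rw [map_sub, h5, coeff_C_mul, PowerSeries.coeff_X, coeff_one]
  rcases n with _ | _ | n <;> norm_num

lemma Gser_sq : Gser ^ 2 * (1 - X) = 1 - 5 * X := by
  ext n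
  rw [pow_two, mul_sub, mul_one, map_sub, Gser_sq_coeff, coeff_one_sub_five_X]
  cases n with
  | zero =>
      rw [if_pos rfl, if_pos rfl, PowerSeries.coeff_zero_mul_X]
      ring
  | succ n =>
      rw [if_neg (Nat.succ_ne_zero n), if_neg (Nat.succ_ne_zero n), coeff_succ_mul_X,
        Gser_sq_coeff]
      cases n with
      | zero => norm_num
      | succ k =>
          rw [if_neg (Nat.succ_ne_zero k), if_neg (by omega : ¬ (k+1+1 = 1))]
          ring


/-- `A m = F_{2m-3}`: 2, 1, 1, 2, 5, 13, 34, ... -/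
def Aq : ℕ → ℚ
  | 0 => 2
  | 1 => 1
  | (m+2) => 3 * Aq (m+1) - Aq m

lemma Aq_pos : ∀ m, 1 ≤ Aq m ∧ 1 ≤ Aq (m+1) ∧ Aq m ≤ 2 * Aq (m+1) := by
  intro m
  induction m with
  | zero => refine ⟨?_, ?_, ?_⟩ <;> norm_num [Aq]
  | succ m ih =>
      obtain ⟨h1, h2, h3⟩ := ih
      have hr : Aq (m+2) = 3 * Aq (m+1) - Aq m := by rw [Aq]
      have hge : Aq (m+1) ≤ Aq (m+2) := by rw [hr]; linarith
      exact ⟨h2, by linarith, by linarith⟩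

lemma Aq_ne_zero (m : ℕ) : Aq m ≠ 0 := by
  have := (Aq_pos m).1; linarith

lemma Aq_rel : ∀ m, Aq m * Aq m - 3 * Aq m * Aq (m+1) + Aq (m+1) * Aq (m+1) = -1 := by
  intro m
  induction m with
  | zero => norm_num [Aq]
  | succ m ih =>
      have h2 : Aq (m+2) = 3 * Aq (m+1) - Aq m := by rw [Aq]
      rw [h2]; linear_combination ih

def alq (m : ℕ) : ℚ := (Aq m ^ 2 + Aq (m+1) ^ 2) / (Aq m * Aq (m+1))

def beq (m : ℕ) : ℚ := if m ≤ 1 then 1 else Aq (m+1) * Aq (m-1) / (Aq m)^2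

noncomputable def Pser : ℕ → ℚ⟦X⟧
  | 0 => 3
  | 1 => 1 - 3 * X
  | (m+2) => (1 - C (alq (m+1)) * X) * Pser (m+1) - C (beq (m+1)) * X^2 * Pser m

noncomputable def Qser : ℕ → ℚ⟦X⟧
  | 0 => -1
  | 1 => -1 + X
  | (m+2) => (1 - C (alq (m+1)) * X) * Qser (m+1) - C (beq (m+1)) * X^2 * Qser m

/-- The generic convergent-step algebra. -/
lemma convergent_step {R : Type*} [CommRing R] (a b x y p q r s c T S PP QQ : R)
    (hc : c = 3*b - a) (hT : T = b*c - (b*b + c*c)*x) (hS : S = c*a*x^2)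
    (hPP : PP = b^2*T*r - b*c*S*p) (hQQ : QQ = b^2*T*s - b*c*S*q)
    (hR : a*a - 3*a*b + b*b = -1)
    (hK1 : a^2*((1-x)*p^2 - (1-5*x)*q^2) = 4*y*(a*b - x))
    (hK2 : a*b*((1-x)*(r*p) - (1-5*x)*(s*q)) = 2*b^2*y*(1-3*x) + 4*y*x^2)
    (hK3 : b^2*((1-x)*r^2 - (1-5*x)*s^2) = 4*(y*x^2)*(b*c - x)) :
    (b*c*((1-x)*(PP*r) - (1-5*x)*(QQ*s))
        = (b^3*c)*(2*c^2*(y*x^2)*(1-3*x) + 4*(y*x^2)*x^2))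
    ∧ (c^2*((1-x)*PP^2 - (1-5*x)*QQ^2)
        = (b^3*c)^2*(4*((y*x^2)*x^2)*(c*(3*c-b) - x))) := by
  subst hPP hQQ hT hS hc
  constructor
  · linear_combination (-(b*(3*b-a)^3*x^2)) * hK2
      + ((b*(3*b-a))*(b*(3*b-a) - (b*b+(3*b-a)*(3*b-a))*x)) * hK3
      + (-(4*b^2*(3*b-a)^2*x^3*y)) * hR
  · linear_combination (b^2*(3*b-a)^6*x^4) * hK1
      + (-(2*b^2*(3*b-a)^4*x^2*(b*(3*b-a) - (b*b+(3*b-a)*(3*b-a))*x))) * hK2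
      + (b^2*(3*b-a)^2*(b*(3*b-a) - (b*b+(3*b-a)*(3*b-a))*x)^2) * hK3
      + (-(4*b^4*(3*b-a)^3*x^3*y*((3*b-a)-2*b*x))) * hR


-- real content starts here

lemma C_Aq_ne_zero (m : ℕ) : (C (Aq m)) ≠ 0 := fun h =>
  Aq_ne_zero m (by simpa using congrArg (constantCoeff) h)

lemma C_Aq_rel (m : ℕ) :
    C (Aq m) * C (Aq m) - 3 * (C (Aq m)) * (C (Aq (m+1)))
      + C (Aq (m+1)) * C (Aq (m+1)) = -1 := by
  have := congrArg (C) (Aq_rel m)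
  have h3 : ((C) (3:ℚ) : ℚ⟦X⟧) = 3 := map_ofNat _ 3
  simp only [map_sub, map_add, map_mul, map_neg, map_one, h3] at this
  linear_combination this

lemma C_Aq_rec (m : ℕ) :
    C (Aq (m+2)) = 3 * C (Aq (m+1)) - C (Aq m) := by
  rw [show Aq (m+2) = 3 * Aq (m+1) - Aq m from by rw [Aq]]
  rw [map_sub, map_mul, map_ofNat]

def K1 (m : ℕ) : Prop :=
  (C (Aq m))^2 * ((1-X) * (Pser m)^2 - (1-5*X) * (Qser m)^2)
    = 4 * X^(2*m) * (C (Aq m) * C (Aq (m+1)) - X)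

def K2 (m : ℕ) : Prop :=
  C (Aq m) * C (Aq (m+1)) *
      ((1-X) * (Pser (m+1) * Pser m) - (1-5*X) * (Qser (m+1) * Qser m))
    = 2 * (C (Aq (m+1)))^2 * X^(2*m) * (1-3*X) + 4 * X^(2*m) * X^2

def K3 (m : ℕ) : Prop :=
  (C (Aq (m+1)))^2 * ((1-X) * (Pser (m+1))^2 - (1-5*X) * (Qser (m+1))^2)
    = 4 * (X^(2*m) * X^2) * (C (Aq (m+1)) * C (Aq (m+2)) - X)

lemma Aq_one : Aq 1 = 1 := rfl
lemma Aq_two : Aq 2 = 1 := by rw [show (2:ℕ) = 0+2 from rfl, Aq]; norm_num [Aq]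
lemma Aq_three : Aq 3 = 2 := by rw [show (3:ℕ) = 1+2 from rfl, Aq]; rw [Aq_two, Aq_one]; norm_num

lemma Pser_two : Pser 2 = 1 - 5*X + 3*X^2 := by
  rw [show Pser 2 = Pser (0+2) from rfl, Pser]
  have h1 : alq 1 = 2 := by
    unfold alq; rw [Aq_one, Aq_two]; norm_num
  have h2 : beq 1 = 1 := by unfold beq; norm_num
  rw [h1, h2, map_one, show ((C) 2 : ℚ⟦X⟧) = 2 from map_ofNat _ 2]
  rw [show Pser 1 = 1 - 3*X from rfl, show Pser 0 = 3 from rfl]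
  ring

lemma Qser_two : Qser 2 = -1 + 3*X - X^2 := by
  rw [show Qser 2 = Qser (0+2) from rfl, Qser]
  have h1 : alq 1 = 2 := by
    unfold alq; rw [Aq_one, Aq_two]; norm_num
  have h2 : beq 1 = 1 := by unfold beq; norm_num
  rw [h1, h2, map_one, show ((C) 2 : ℚ⟦X⟧) = 2 from map_ofNat _ 2]
  rw [show Qser 1 = -1 + X from rfl, show Qser 0 = -1 from rfl]
  ring

lemma Kmain : ∀ m, 1 ≤ m → K1 m ∧ K2 m ∧ K3 m := by
  intro m hm
  induction m, hm using Nat.le_induction with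
  | base =>
      have hC1 : (C (Aq 1)) = 1 := by rw [Aq_one, map_one]
      have hC2 : (C (Aq 2)) = 1 := by rw [Aq_two, map_one]
      have hC3 : (C (Aq 3)) = 2 := by rw [Aq_three]; exact map_ofNat _ 2
      have hP1 : Pser 1 = 1 - 3*X := rfl
      have hQ1 : Qser 1 = -1 + X := rfl
      refine ⟨?_, ?_, ?_⟩
      · unfold K1
        rw [hC1, hC2, hP1, hQ1]
        ring
      · unfold K2
        rw [hC1, hC2, hP1, hQ1, Pser_two, Qser_two]
        ring
      · unfold K3
        rw [hC2, hC3, Pser_two, Qser_two]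
        ring
  | succ m hm ih =>
      obtain ⟨hK1, hK2, hK3⟩ := ih
      set a := C (Aq m) with ha
      set b := C (Aq (m+1)) with hb
      set c := C (Aq (m+2)) with hcdef
      have hαs : alq (m+1) * (Aq (m+1) * Aq (m+2)) = Aq (m+1)^2 + Aq (m+2)^2 := by
        unfold alq
        have h1 := Aq_ne_zero (m+1)
        have h2 := Aq_ne_zero (m+2)
        field_simp
      have hα : C (alq (m+1)) * (b * c) = b^2 + c^2 := by
        rw [hb, hcdef, ← map_mul, ← map_mul, hαs, map_add, map_pow, map_pow]
      have hβs : beq (m+1) * (Aq (m+1))^2 = Aq (m+2) * Aq m := by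
        unfold beq
        rw [if_neg (by omega)]
        have : m + 1 - 1 = m := by omega
        rw [this]
        have h1 := Aq_ne_zero (m+1)
        have h2 := Aq_ne_zero (m+2)
        have h3 := Aq_ne_zero m
        field_simp
      have hβ : C (beq (m+1)) * b^2 = c * a := by
        rw [ha, hb, hcdef, ← map_pow, ← map_mul, hβs, map_mul]
      have hexpP : b^3 * c * Pser (m+2)
          = b^2 * (b*c - (b*b + c*c)*X) * Pser (m+1) - b*c*((c*a)*X^2) * Pser m := by
        rw [show Pser (m+2) = (1 - C (alq (m+1)) * X) * Pser (m+1)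
            - C (beq (m+1)) * X^2 * Pser m from by rw [Pser]]
        linear_combination (-(b^2 * X * Pser (m+1))) * hα + (-(b * c * X^2 * Pser m)) * hβ
      have hexpQ : b^3 * c * Qser (m+2)
          = b^2 * (b*c - (b*b + c*c)*X) * Qser (m+1) - b*c*((c*a)*X^2) * Qser m := by
        rw [show Qser (m+2) = (1 - C (alq (m+1)) * X) * Qser (m+1)
            - C (beq (m+1)) * X^2 * Qser m from by rw [Qser]]
        linear_combination (-(b^2 * X * Qser (m+1))) * hα + (-(b * c * X^2 * Qser m)) * hβ
      have hc : c = 3*b - a := C_Aq_rec m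
      have hR : a*a - 3*a*b + b*b = -1 := C_Aq_rel m
      obtain ⟨CI, CII⟩ := convergent_step a b X (X^(2*m)) (Pser m) (Qser m)
        (Pser (m+1)) (Qser (m+1)) c (b*c - (b*b + c*c)*X) ((c*a)*X^2)
        (b^3 * c * Pser (m+2)) (b^3 * c * Qser (m+2))
        hc rfl rfl hexpP hexpQ hR hK1 hK2 hK3
      have hκ : b^3 * c ≠ 0 := mul_ne_zero (pow_ne_zero _ (C_Aq_ne_zero _)) (C_Aq_ne_zero _)
      have hpow : (X : ℚ⟦X⟧)^(2*(m+1)) = X^(2*m) * X^2 := by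
        rw [show 2*(m+1) = 2*m + 2 from by ring, pow_add]
      refine ⟨?_, ?_, ?_⟩
      · unfold K1
        rw [hpow]
        exact hK3
      · unfold K2
        rw [hpow]
        apply mul_left_cancel₀ hκ
        linear_combination CI
      · unfold K3
        rw [hpow]
        rw [show C (Aq (m+1+2)) = 3 * c - b from C_Aq_rec (m+1)]
        apply mul_left_cancel₀ (pow_ne_zero 2 hκ)
        linear_combination CII

lemma Pser_constantCoeff : ∀ m, constantCoeff (Pser (m+1)) = 1 := by
  intro m
  induction m with
  | zero =>
      rw [show Pser 1 = 1 - 3*X from rfl]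
      simp
  | succ m ih =>
      rw [show Pser (m+2) = (1 - C (alq (m+1)) * X) * Pser (m+1)
          - C (beq (m+1)) * X^2 * Pser m from by rw [Pser]]
      rw [map_sub, map_mul, map_mul, map_sub, map_mul, map_one, ih]
      simp

lemma Qser_constantCoeff : ∀ m, constantCoeff (Qser (m+1)) = -1 := by
  intro m
  induction m with
  | zero =>
      rw [show Qser 1 = -1 + X from rfl]
      simp
  | succ m ih =>
      rw [show Qser (m+2) = (1 - C (alq (m+1)) * X) * Qser (m+1)
          - C (beq (m+1)) * X^2 * Qser m from by rw [Qser]]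
      rw [map_sub, map_mul, map_mul, map_sub, map_mul, map_one, ih]
      simp

lemma Nser_coeff_eq_zero (m : ℕ) (hm : 1 ≤ m) (n : ℕ) (hn : n < 2*m) :
    (coeff n) (Pser m + Qser m * Gser) = 0 := by
  obtain ⟨hK1, -, -⟩ := Kmain m hm
  unfold K1 at hK1
  set N := Pser m + Qser m * Gser with hN
  set B := (C (Aq m))^2 * ((1-X) * (Pser m - Qser m * Gser)) with hB
  have hfac : B * N = 4 * X^(2*m) * (C (Aq m) * C (Aq (m+1)) - X) := by
    rw [← hK1, hB, hN]
    have h5 : (1 - 5*X : ℚ⟦X⟧) = Gser^2 * (1-X) := Gser_sq.symm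
    rw [h5]
    ring
  have hBunit : IsUnit B := by
    apply isUnit_iff_constantCoeff.mpr
    apply isUnit_iff_ne_zero.mpr
    rw [hB]
    obtain ⟨m', rfl⟩ : ∃ m', m = m' + 1 := ⟨m - 1, by omega⟩
    rw [map_mul, map_mul, map_sub, map_sub, map_mul, Pser_constantCoeff, Qser_constantCoeff,
      Gser_constantCoeff, map_pow, map_one, constantCoeff_X, constantCoeff_C]
    have := Aq_ne_zero (m'+1)
    intro hcontra
    apply this
    have h2 : (Aq (m'+1))^2 * ((1 - 0) * (1 - (-1) * 1)) = Aq (m'+1)^2 * 2 := by ring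
    rw [h2] at hcontra
    rcases mul_eq_zero.mp hcontra with h | h
    · exact pow_eq_zero_iff (by norm_num) |>.mp h
    · norm_num at h
  have hdvd : (X : ℚ⟦X⟧)^(2*m) ∣ N := by
    have h1 : (X : ℚ⟦X⟧)^(2*m) ∣ B * N :=
      ⟨4 * (C (Aq m) * C (Aq (m+1)) - X), by rw [hfac]; ring⟩
    exact (IsUnit.dvd_mul_left hBunit).mp h1
  exact X_pow_dvd_iff.mp hdvd n hn


lemma fib_q_rec (k : ℕ) :
    ((Nat.fib (k+4) : ℚ)) = 3 * (Nat.fib (k+2) : ℚ) - (Nat.fib k : ℚ) := by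
  have h1 : Nat.fib (k+4) = Nat.fib (k+2) + Nat.fib (k+3) := Nat.fib_add_two
  have h2 : Nat.fib (k+3) = Nat.fib (k+1) + Nat.fib (k+2) := Nat.fib_add_two
  have h3 : Nat.fib (k+2) = Nat.fib k + Nat.fib (k+1) := Nat.fib_add_two
  have q1 := congrArg (Nat.cast : ℕ → ℚ) h1
  have q2 := congrArg (Nat.cast : ℕ → ℚ) h2
  have q3 := congrArg (Nat.cast : ℕ → ℚ) h3
  push_cast at q1 q2 q3
  linarith

lemma Aq_fib : ∀ k, Aq (k+2) = (Nat.fib (2*k+1) : ℚ) := by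
  intro k
  induction k using Nat.strong_induction_on with
  | _ k ih =>
      match k with
      | 0 => norm_num [Aq, show Aq 2 = 1 from by rw [show (2:ℕ) = 0+2 from rfl, Aq]; norm_num [Aq]]
      | 1 =>
          rw [show (1:ℕ)+2 = 1+2 from rfl, Aq]
          rw [ih 0 (by omega)]
          norm_num [Aq]
      | (j+2) =>
          rw [show j+2+2 = (j+2)+2 from rfl, Aq]
          rw [ih (j+1) (by omega), ih j (by omega)]
          have := fib_q_rec (2*j+1)
          rw [show 2*(j+2)+1 = 2*j+1+4 from by ring, this,
            show 2*(j+1)+1 = 2*j+1+2 from by ring]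

lemma A_eq : ∀ m, (Aq m) = ((fibZ (2*(m:ℤ) - 3) : ℤ) : ℚ) := by
  intro m
  match m with
  | 0 =>
      rw [show (2*((0:ℕ):ℤ) - 3) = Int.negSucc 2 from by decide]
      rw [show fibZ (Int.negSucc 2) = 2 from by norm_num [fibZ]]
      norm_num [Aq]
  | 1 =>
      rw [show (2*((1:ℕ):ℤ) - 3) = Int.negSucc 0 from by decide]
      rw [show fibZ (Int.negSucc 0) = 1 from by norm_num [fibZ]]
      norm_num [Aq]
  | (k+2) =>
      rw [show (2*(((k+2:ℕ)):ℤ) - 3) = ((2*k+1 : ℕ) : ℤ) from by push_cast; ring]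
      rw [show fibZ ((2*k+1 : ℕ) : ℤ) = Nat.fib (2*k+1) from rfl]
      rw [Aq_fib k]
      norm_num


end DyckAux

open PowerSeries in
/-- The generating function `F = ∑ Dyck_n(d) Xⁿ` satisfies `(3 - 2F)² (1 - X) = 1 - 5X`,
and `F` is the branch with constant term 1. -/
theorem dyck_d_genfun_algebraic
(d : ℕ → ℚ) (hd0 : d 0 = 1)
    (hdodd : ∀ m : ℕ, 1 ≤ m →
      d (2 * m - 1) = (fibZ (2 * (m : ℤ) - 1) : ℚ) / (fibZ (2 * (m : ℤ) - 3) : ℚ))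
    (hdeven : ∀ m : ℕ, 1 ≤ m →
      d (2 * m) = (fibZ (2 * (m : ℤ) - 3) : ℚ) / (fibZ (2 * (m : ℤ) - 1) : ℚ)) :
    (3 - 2 * PowerSeries.mk fun n => dyckSum n d) ^ 2 * (1 - PowerSeries.X) =
        (1 - 5 * PowerSeries.X : PowerSeries ℚ) ∧
      PowerSeries.constantCoeff (PowerSeries.mk fun n => dyckSum n d) = 1 := by
  -- d values in terms of Aq
  have hAe : ∀ m : ℕ, ((fibZ (2*(m:ℤ) - 1) : ℤ) : ℚ) = Aq (m+1) := by
    intro m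
    rw [A_eq (m+1)]
    congr 2
    push_cast
    ring
  have hd_odd : ∀ m : ℕ, 1 ≤ m → d (2*m - 1) = Aq (m+1) / Aq m := by
    intro m hm
    rw [hdodd m hm, ← hAe m, A_eq m]
  have hd_even : ∀ m : ℕ, 1 ≤ m → d (2*m) = Aq m / Aq (m+1) := by
    intro m hm
    rw [hdeven m hm, ← hAe m, A_eq m]
  have halq : ∀ m : ℕ, 1 ≤ m → alq m = d (2*m) + d (2*m - 1) := by
    intro m hm
    rw [hd_even m hm, hd_odd m hm]
    unfold alq
    have h1 := Aq_ne_zero m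
    have h2 := Aq_ne_zero (m+1)
    field_simp
  have hbeq : ∀ m : ℕ, 1 ≤ m → beq m = d (2*m - 1) * d (2*m - 2) := by
    intro m hm
    match m, hm with
    | 1, _ =>
        have h1 : d 1 = Aq 2 / Aq 1 := by
          have := hd_odd 1 (le_refl 1); simpa using this
        have hA2 : Aq 2 = 1 := by rw [show (2:ℕ) = 0+2 from rfl, Aq]; norm_num [Aq]
        have hA1 : Aq 1 = 1 := rfl
        rw [show 2*1-1 = 1 from rfl, show 2*1-2 = 0 from rfl, h1, hd0, hA1, hA2]
        norm_num [beq]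
    | (j+2), _ =>
        have h1 : d (2*(j+2) - 1) = Aq (j+3) / Aq (j+2) := hd_odd (j+2) (by omega)
        have h2 : d (2*(j+2) - 2) = Aq (j+1) / Aq (j+2) := by
          have := hd_even (j+1) (by omega)
          rw [show 2*(j+2)-2 = 2*(j+1) from by omega, this]
        rw [h1, h2]
        unfold beq
        rw [if_neg (by omega)]
        have h3 : j + 2 - 1 = j + 1 := by omega
        rw [h3]
        have e1 := Aq_ne_zero (j+2)
        have e2 := Aq_ne_zero (j+3)
        have e3 := Aq_ne_zero (j+1)
        rw [show j+2+1 = j+3 from rfl]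
        field_simp
  -- the descent
  have main : ∀ n m : ℕ, (coeff n) (Pser m + Qser m * Gser) = 2 * Ssum d (2*m) (2*(n-m)) := by
    intro n
    induction n using Nat.strong_induction_on with
    | _ n ihn =>
        have inner : ∀ j m : ℕ, n < 2*m + j →
            (coeff n) (Pser m + Qser m * Gser) = 2 * Ssum d (2*m) (2*(n-m)) := by
          intro j
          induction j with
          | zero =>
              intro m hmn
              rw [Nser_coeff_eq_zero m (by omega) n (by omega)]
              rcases le_or_gt m n with h | h
              · rw [Ssum_eq_zero_of_lt d _ _ (by omega)]
                ring
              · rw [show 2*(n-m) = 0 from by omega, Ssum_zero, if_neg (by omega)]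
                ring
          | succ j ihj =>
              intro m hmn
              by_cases hlt : n < 2*m
              · exact ihj m (by omega)
              · push_neg at hlt
                match m, hlt with
                | 0, _ =>
                    match n with
                    | 0 =>
                        rw [show Pser 0 + Qser 0 * Gser = 3 - Gser from by
                          rw [show Pser 0 = 3 from rfl, show Qser 0 = -1 from rfl]; ring]
                        rw [map_sub]
                        rw [show (coeff 0) (3:ℚ⟦X⟧) = 3 from by
                            rw [coeff_zero_eq_constantCoeff]; exact map_ofNat _ 3,
                          coeff_zero_eq_constantCoeff, Gser_constantCoeff]
                        rw [Ssum_zero, if_pos rfl]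
                        norm_num
                    | (n'+1) =>
                        have hrel : Pser 0 + Qser 0 * Gser
                            = 2 + (Pser 1 + Qser 1 * Gser) + (Pser 0 + Qser 0 * Gser) * X := by
                          rw [show Pser 0 = 3 from rfl, show Qser 0 = -1 from rfl,
                            show Pser 1 = 1 - 3*X from rfl, show Qser 1 = -1 + X from rfl]
                          ring
                        rw [hrel, map_add, map_add, coeff_succ_mul_X]
                        rw [show (coeff (n'+1)) (2:ℚ⟦X⟧) = 0 from by
                          rw [show (2:ℚ⟦X⟧) = C 2 from (map_ofNat _ 2).symm, coeff_C,
                            if_neg (Nat.succ_ne_zero n')]]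
                        rw [ihj 1 (by omega), ihn n' (by omega)]
                        rw [show 2*(n'+1-1) = 2*n' from by omega,
                          show 2*(n'-0) = 2*n' from by omega,
                          show 2*(n'+1-0) = 2*n'+2 from by omega,
                          show (2*1 : ℕ) = 2 from rfl, show (2*0 : ℕ) = 0 from rfl]
                        rw [Ssum_zero_two_step d (2*n'), hd0]
                        ring
                | (m'+1), _ =>
                    obtain ⟨k, rfl⟩ : ∃ k, n = k + 2 := ⟨n - 2, by omega⟩
                    have hrel : Pser (m'+1) + Qser (m'+1) * Gser
                        = (Pser (m'+2) + Qser (m'+2) * Gser)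
                          + C (alq (m'+1)) * ((Pser (m'+1) + Qser (m'+1) * Gser) * X)
                          + C (beq (m'+1)) * ((Pser m' + Qser m' * Gser) * X * X) := by
                      rw [show Pser (m'+2) = (1 - C (alq (m'+1)) * X) * Pser (m'+1)
                          - C (beq (m'+1)) * X^2 * Pser m' from by rw [Pser],
                        show Qser (m'+2) = (1 - C (alq (m'+1)) * X) * Qser (m'+1)
                          - C (beq (m'+1)) * X^2 * Qser m' from by rw [Qser]]
                      ring
                    rw [hrel, map_add, map_add, coeff_C_mul, coeff_C_mul, coeff_succ_mul_X,
                      show (Pser m' + Qser m' * Gser) * X * X = ((Pser m' + Qser m' * Gser) * X) * X from by ring,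
                      coeff_succ_mul_X, coeff_succ_mul_X]
                    rw [ihj (m'+2) (by omega), ihn (k+1) (by omega), ihn k (by omega)]
                    rw [halq (m'+1) (by omega), hbeq (m'+1) (by omega)]
                    rw [show 2*(m'+1) = 2*m'+2 from by ring, show 2*(m'+2) = 2*m'+4 from by ring,
                      show 2*m'+2-1 = 2*m'+1 from by omega,
                      show 2*m'+2-2 = 2*m' from by omega]
                    rw [show 2*(k+2-(m'+1)) = 2*(k-m')+2 from by omega,
                      show 2*(k+2-(m'+2)) = 2*(k-m') from by omega,
                      show 2*(k+1-(m'+1)) = 2*(k-m') from by omega,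
                      show 2*(k-m') = 2*(k-m') from rfl]
                    rw [Ssum_two_step d m' (2*(k-m'))]
                    ring
        intro m
        exact inner (n+1) m (by omega)
  -- conclude
  set F := PowerSeries.mk fun n => dyckSum n d with hF
  have hN0 : ∀ n, (coeff n) (3 - Gser) = 2 * dyckSum n d := by
    intro n
    have h := main n 0
    rw [show Pser 0 + Qser 0 * Gser = 3 - Gser from by
      rw [show Pser 0 = 3 from rfl, show Qser 0 = -1 from rfl]; ring] at h
    rw [h, dyckSum_eq_Ssum]
    rw [show (2*0 : ℕ) = 0 from rfl, show 2*(n-0) = 2*n from by omega]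
  have hG : (3 - 2 * F : ℚ⟦X⟧) = Gser := by
    ext n
    have h := hN0 n
    rw [map_sub] at h ⊢
    rw [show (coeff n) (2 * F) = 2 * dyckSum n d from by
      rw [show (2:ℚ⟦X⟧) * F = C 2 * F from by rw [map_ofNat], coeff_C_mul, hF, coeff_mk]]
    linarith
  constructor
  · rw [hG, Gser_sq]
  · show constantCoeff F = 1
    have : constantCoeff F = dyckSum 0 d := by rw [hF]; simp
    rw [this, dyckSum_eq_Ssum]
    rw [show (2*0 : ℕ) = 0 from rfl, Ssum_zero, if_pos rfl]
end

section
/- Let b=(b_0,b_1,...) and λ=(λ_0,λ_1,...) be the rational sequences with b_0=λ_0=1 and, for n≥1, b_n = 3 - 1/(F_{2n-1}·F_{2n-3}) and λ_n = 1 + 1/F_{2n-1}². Then for every n≥0, the rational number Mot_n(b,λ) is a positive integer. -/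
/-- A step of a Motzkin path: up `(1,1)`, down `(1,-1)`, or horizontal `(1,0)`. -/
inductive MStep : Type
  | up : MStep
  | down : MStep
  | flat : MStep
  deriving DecidableEq

instance : Fintype MStep :=
  ⟨{MStep.up, MStep.down, MStep.flat}, fun x => by cases x <;> simp⟩

/-- The vertical displacement of a Motzkin step. -/
def MStep.val : MStep → ℤ
  | .up => 1
  | .down => -1
  | .flat => 0

/-- The height of the path after its first `k` steps. -/
def mHeight (l : List MStep) (k : ℕ) : ℤ := ((l.take k).map MStep.val).sum

/-- A list of steps is a Motzkin path if it never goes below the x-axis and ends at height 0. -/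
def IsMotzkin (l : List MStep) : Prop :=
  (∀ k : ℕ, 0 ≤ mHeight l k) ∧ mHeight l l.length = 0

/-- The weight of a Motzkin path w.r.t. `(b, lam)`: a factor `b i` for every horizontal step
of height `i` and a factor `lam i` for every down step of height `i` (the height of a step
being the `y`-coordinate of its ending point). -/
def mWeight (b lam : ℕ → ℚ) (l : List MStep) : ℚ :=
  ∏ i ∈ Finset.range l.length,
    match l.getD i MStep.up with
    | .up => 1
    | .flat => b (mHeight l (i + 1)).toNat
    | .down => lam (mHeight l (i + 1)).toNat

open Classical in
/-- `Mot_n(b,lam)`: the sum of the weights of all Motzkin paths of length `n`. -/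
noncomputable def motSum (n : ℕ) (b lam : ℕ → ℚ) : ℚ :=
  ∑ f : Fin n → MStep,
    if IsMotzkin (List.ofFn f) then mWeight b lam (List.ofFn f) else 0

def gg : ℕ → ℤ
  | 0 => 2
  | 1 => 1
  | n+2 => 3 * gg (n+1) - gg n

lemma gg_aux : ∀ n, 0 < gg (n+1) ∧ gg (n+1) ≤ gg (n+2) := by
  intro n
  induction n with
  | zero => norm_num [gg]
  | succ m ih =>
    obtain ⟨h1, h2⟩ := ih
    have h3 : gg (m+3) = 3 * gg (m+2) - gg (m+1) := rfl
    have h4 : gg (m+1+1) = gg (m+2) := rfl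
    have h5 : gg (m+1+2) = gg (m+3) := rfl
    omega

lemma gg_pos : ∀ n, 0 < gg n := by
  intro n
  cases n with
  | zero => norm_num [gg]
  | succ m => exact (gg_aux m).1

lemma gg_inv : ∀ n, gg n ^ 2 + gg (n+1) ^ 2 - 3 * gg n * gg (n+1) = -1 := by
  intro n
  induction n with
  | zero => norm_num [gg]
  | succ m ih =>
    have h3 : gg (m+2) = 3 * gg (m+1) - gg m := rfl
    rw [h3]
    linear_combination ih

def TT : ℕ → ℕ → ℕ
  | 0, k => if k = 0 then 1 else 0
  | n+1, k => (if k = 0 then 2 else 3) * TT n k + TT n (k+1) + (if k = 0 then 0 else TT n (k-1))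

lemma TT_pos : ∀ n, 0 < TT n 0 := by
  intro n
  induction n with
  | zero => simp [TT]
  | succ m ih => simp only [TT]; norm_num; omega

def pw (b lam : ℕ → ℚ) : ℕ → List MStep → ℚ
  | k, [] => if k = 0 then 1 else 0
  | k, (MStep.up :: l) => pw b lam (k+1) l
  | k, (MStep.flat :: l) => b k * pw b lam k l
  | k, (MStep.down :: l) => if k = 0 then 0 else lam (k-1) * pw b lam (k-1) l

noncomputable def G (b lam : ℕ → ℚ) (k n : ℕ) : ℚ :=
  ∑ f : Fin n → MStep, pw b lam k (List.ofFn f)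

lemma G_zero (b lam : ℕ → ℚ) (k : ℕ) : G b lam k 0 = if k = 0 then 1 else 0 := by
  simp [G, pw]

lemma sum_mstep (h : MStep → ℚ) : ∑ s : MStep, h s = h .up + h .down + h .flat := by
  rw [show (Finset.univ : Finset MStep) = {.up, .down, .flat} from by decide]
  simp [Finset.sum_insert, Finset.mem_insert]
  ring

lemma G_succ (b lam : ℕ → ℚ) (k n : ℕ) :
    G b lam k (n+1) = b k * G b lam k n + G b lam (k+1) n +
      (if k = 0 then 0 else lam (k-1) * G b lam (k-1) n) := by
  rw [G, ← (Fin.consEquiv (fun _ : Fin (n+1) => MStep)).sum_comp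
      (fun f => pw b lam k (List.ofFn f)), Fintype.sum_prod_type]
  have hofn : ∀ (s : MStep) (f : Fin n → MStep),
      List.ofFn ((Fin.consEquiv (fun _ : Fin (n+1) => MStep)) (s, f)) = s :: List.ofFn f := by
    intro s f
    rw [List.ofFn_succ]
    simp [Fin.consEquiv]
  simp only [hofn]
  rw [sum_mstep (fun s => ∑ f : Fin n → MStep, pw b lam k (s :: List.ofFn f))]
  simp only [pw]
  by_cases hk : k = 0
  · simp [hk, G, ← Finset.mul_sum]
    ring
  · simp [hk, G, ← Finset.mul_sum]
    ring

lemma mHeight_nil (j : ℕ) : mHeight [] j = 0 := by simp [mHeight]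

lemma mHeight_zero (l : List MStep) : mHeight l 0 = 0 := by simp [mHeight]

lemma mHeight_cons_zero (s : MStep) (l : List MStep) : mHeight (s :: l) 0 = 0 := by
  simp [mHeight]

lemma mHeight_cons (s : MStep) (l : List MStep) (j : ℕ) :
    mHeight (s :: l) (j+1) = s.val + mHeight l j := by
  simp [mHeight, List.take_succ_cons]

open Classical in
lemma pw_eq (b lam : ℕ → ℚ) : ∀ (l : List MStep) (k : ℕ),
    pw b lam k l =
      if (∀ j, 0 ≤ (k:ℤ) + mHeight l j) ∧ (k:ℤ) + mHeight l l.length = 0 then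
        ∏ i ∈ Finset.range l.length,
          (match l.getD i MStep.up with
           | .up => (1:ℚ)
           | .flat => b ((k:ℤ) + mHeight l (i+1)).toNat
           | .down => lam ((k:ℤ) + mHeight l (i+1)).toNat)
      else 0 := by
  intro l
  induction l with
  | nil =>
    intro k
    simp only [pw, List.length_nil, mHeight_nil, add_zero, Finset.range_zero,
      Finset.prod_empty]
    by_cases hk : k = 0
    · simp [hk]
    · have : ¬ ((k:ℤ) = 0) := by exact_mod_cast hk
      simp [hk, this]
  | cons s l ih =>
    intro k
    -- generic facts
    have hlen : (s :: l).length = l.length + 1 := rfl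
    cases s with
    | up =>
      have hcond : ((∀ j, 0 ≤ (k:ℤ) + mHeight (MStep.up :: l) j) ∧
            (k:ℤ) + mHeight (MStep.up :: l) (l.length + 1) = 0) ↔
          ((∀ j, 0 ≤ ((k+1:ℕ):ℤ) + mHeight l j) ∧ ((k+1:ℕ):ℤ) + mHeight l l.length = 0) := by
        constructor
        · rintro ⟨h1, h2⟩
          refine ⟨fun j => ?_, ?_⟩
          · have := h1 (j+1); rw [mHeight_cons] at this; push_cast; push_cast at this
            simp [MStep.val] at this; linarith
          · rw [mHeight_cons] at h2; push_cast; push_cast at h2; simp [MStep.val] at h2; linarith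
        · rintro ⟨h1, h2⟩
          refine ⟨fun j => ?_, ?_⟩
          · cases j with
            | zero => simp [mHeight_cons_zero]
            | succ i =>
              have := h1 i; rw [mHeight_cons]; push_cast; push_cast at this
              simp [MStep.val]; linarith
          · rw [mHeight_cons]; push_cast; push_cast at h2; simp [MStep.val]; linarith
      rw [show pw b lam k (MStep.up :: l) = pw b lam (k+1) l from rfl, ih (k+1)]
      by_cases hc : (∀ j, 0 ≤ ((k+1:ℕ):ℤ) + mHeight l j) ∧ ((k+1:ℕ):ℤ) + mHeight l l.length = 0
      · rw [if_pos hc, if_pos (by rw [hlen]; exact hcond.mpr hc)]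
        rw [hlen, Finset.prod_range_succ']
        have h0 : (match (MStep.up :: l).getD 0 MStep.up with
           | .up => (1:ℚ)
           | .flat => b ((k:ℤ) + mHeight (MStep.up :: l) (0+1)).toNat
           | .down => lam ((k:ℤ) + mHeight (MStep.up :: l) (0+1)).toNat) = 1 := rfl
        rw [h0, mul_one]
        refine Finset.prod_congr rfl (fun i _ => ?_)
        have hg : (MStep.up :: l).getD (i+1) MStep.up = l.getD i MStep.up := rfl
        have hh : (k:ℤ) + mHeight (MStep.up :: l) (i+1+1) = ((k+1:ℕ):ℤ) + mHeight l (i+1) := by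
          rw [mHeight_cons]; push_cast; simp [MStep.val]; ring
        simp only [hg, hh]
      · rw [if_neg hc, if_neg (by rw [hlen]; exact fun h => hc (hcond.mp h))]
    | flat =>
      have hcond : ((∀ j, 0 ≤ (k:ℤ) + mHeight (MStep.flat :: l) j) ∧
            (k:ℤ) + mHeight (MStep.flat :: l) (l.length + 1) = 0) ↔
          ((∀ j, 0 ≤ (k:ℤ) + mHeight l j) ∧ (k:ℤ) + mHeight l l.length = 0) := by
        constructor
        · rintro ⟨h1, h2⟩
          refine ⟨fun j => ?_, ?_⟩
          · have := h1 (j+1); rw [mHeight_cons] at this; simpa [MStep.val] using this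
          · rw [mHeight_cons] at h2; simpa [MStep.val] using h2
        · rintro ⟨h1, h2⟩
          refine ⟨fun j => ?_, ?_⟩
          · cases j with
            | zero => simp [mHeight_cons_zero]
            | succ i => rw [mHeight_cons]; simpa [MStep.val] using h1 i
          · rw [mHeight_cons]; simpa [MStep.val] using h2
      rw [show pw b lam k (MStep.flat :: l) = b k * pw b lam k l from rfl, ih k]
      by_cases hc : (∀ j, 0 ≤ (k:ℤ) + mHeight l j) ∧ (k:ℤ) + mHeight l l.length = 0
      · rw [if_pos hc, if_pos (by rw [hlen]; exact hcond.mpr hc)]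
        rw [hlen, Finset.prod_range_succ']
        have h0 : (match (MStep.flat :: l).getD 0 MStep.up with
           | .up => (1:ℚ)
           | .flat => b ((k:ℤ) + mHeight (MStep.flat :: l) (0+1)).toNat
           | .down => lam ((k:ℤ) + mHeight (MStep.flat :: l) (0+1)).toNat)
             = b ((k:ℤ) + mHeight (MStep.flat :: l) 1).toNat := rfl
        have h1 : (k:ℤ) + mHeight (MStep.flat :: l) 1 = (k:ℤ) := by
          rw [mHeight_cons, mHeight_zero]; simp [MStep.val]
        rw [h0, h1, Int.toNat_natCast]
        rw [mul_comm]
        congr 1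
        refine Finset.prod_congr rfl (fun i _ => ?_)
        have hg : (MStep.flat :: l).getD (i+1) MStep.up = l.getD i MStep.up := rfl
        have hh : (k:ℤ) + mHeight (MStep.flat :: l) (i+1+1) = (k:ℤ) + mHeight l (i+1) := by
          rw [mHeight_cons]; simp [MStep.val]
        simp only [hg, hh]
      · rw [if_neg hc, if_neg (by rw [hlen]; exact fun h => hc (hcond.mp h))]
        ring
    | down =>
      cases k with
      | zero =>
        have hcneg : ¬ ((∀ j, 0 ≤ ((0:ℕ):ℤ) + mHeight (MStep.down :: l) j) ∧
            ((0:ℕ):ℤ) + mHeight (MStep.down :: l) (MStep.down :: l).length = 0) := by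
          rintro ⟨h1, -⟩
          have := h1 1
          rw [mHeight_cons, mHeight_zero] at this
          simp [MStep.val] at this
        rw [if_neg hcneg]
        rfl
      | succ k' =>
        have hcond : ((∀ j, 0 ≤ ((k'+1:ℕ):ℤ) + mHeight (MStep.down :: l) j) ∧
              ((k'+1:ℕ):ℤ) + mHeight (MStep.down :: l) (l.length + 1) = 0) ↔
            ((∀ j, 0 ≤ ((k':ℕ):ℤ) + mHeight l j) ∧ ((k':ℕ):ℤ) + mHeight l l.length = 0) := by
          constructor
          · rintro ⟨h1, h2⟩
            refine ⟨fun j => ?_, ?_⟩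
            · have := h1 (j+1); rw [mHeight_cons] at this; push_cast; push_cast at this
              simp [MStep.val] at this; linarith
            · rw [mHeight_cons] at h2; push_cast; push_cast at h2; simp [MStep.val] at h2; linarith
          · rintro ⟨h1, h2⟩
            refine ⟨fun j => ?_, ?_⟩
            · cases j with
              | zero => simp [mHeight_cons_zero]; positivity
              | succ i =>
                have := h1 i; rw [mHeight_cons]; push_cast; push_cast at this
                simp [MStep.val]; linarith
            · rw [mHeight_cons]; push_cast; push_cast at h2; simp [MStep.val]; linarith
        rw [show pw b lam (k'+1) (MStep.down :: l) = lam k' * pw b lam k' l from by simp [pw], ih k']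
        by_cases hc : (∀ j, 0 ≤ ((k':ℕ):ℤ) + mHeight l j) ∧ ((k':ℕ):ℤ) + mHeight l l.length = 0
        · rw [if_pos hc, if_pos (by rw [hlen]; exact hcond.mpr hc)]
          rw [hlen, Finset.prod_range_succ']
          have h0 : (match (MStep.down :: l).getD 0 MStep.up with
             | .up => (1:ℚ)
             | .flat => b (((k'+1:ℕ):ℤ) + mHeight (MStep.down :: l) (0+1)).toNat
             | .down => lam (((k'+1:ℕ):ℤ) + mHeight (MStep.down :: l) (0+1)).toNat)
               = lam (((k'+1:ℕ):ℤ) + mHeight (MStep.down :: l) 1).toNat := rfl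
          have h1 : ((k'+1:ℕ):ℤ) + mHeight (MStep.down :: l) 1 = (k':ℤ) := by
            rw [mHeight_cons, mHeight_zero]; push_cast; simp [MStep.val]
          rw [h0, h1, Int.toNat_natCast]
          rw [mul_comm]
          congr 1
          refine Finset.prod_congr rfl (fun i _ => ?_)
          have hg : (MStep.down :: l).getD (i+1) MStep.up = l.getD i MStep.up := rfl
          have hh : ((k'+1:ℕ):ℤ) + mHeight (MStep.down :: l) (i+1+1)
              = ((k':ℕ):ℤ) + mHeight l (i+1) := by
            rw [mHeight_cons]; push_cast; simp [MStep.val]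
          simp only [hg, hh]
        · rw [if_neg hc, if_neg (by rw [hlen]; exact fun h => hc (hcond.mp h))]
          ring

open Classical in
lemma pw_zero (b lam : ℕ → ℚ) (l : List MStep) :
    pw b lam 0 l = if IsMotzkin l then mWeight b lam l else 0 := by
  rw [pw_eq]
  have hc : ((∀ j, 0 ≤ ((0:ℕ):ℤ) + mHeight l j) ∧ ((0:ℕ):ℤ) + mHeight l l.length = 0)
      ↔ IsMotzkin l := by
    simp [IsMotzkin]
  by_cases h : IsMotzkin l
  · rw [if_pos (hc.mpr h), if_pos h, mWeight]
    refine Finset.prod_congr rfl (fun i _ => ?_)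
    have hz : ((0:ℕ):ℤ) + mHeight l (i+1) = mHeight l (i+1) := by simp
    rw [hz]
  · rw [if_neg (fun hh => h (hc.mp hh)), if_neg h]

lemma motSum_eq_G (b lam : ℕ → ℚ) (n : ℕ) : motSum n b lam = G b lam 0 n := by
  rw [motSum, G]
  exact Finset.sum_congr rfl (fun f _ => (pw_zero b lam (List.ofFn f)).symm)

lemma fibZ_ofNat (m : ℕ) : fibZ (m : ℤ) = Nat.fib m := rfl

lemma natfib_id (m : ℕ) : Nat.fib (m+4) + Nat.fib m = 3 * Nat.fib (m+2) := by
  have h1 : Nat.fib (m+2) = Nat.fib m + Nat.fib (m+1) := Nat.fib_add_two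
  have h2 : Nat.fib (m+3) = Nat.fib (m+1) + Nat.fib (m+2) := Nat.fib_add_two
  have h3 : Nat.fib (m+4) = Nat.fib (m+2) + Nat.fib (m+3) := Nat.fib_add_two
  omega

lemma fibZ_gg : ∀ k : ℕ, fibZ (2*(k:ℤ) - 3) = gg k := by
  have key : ∀ k : ℕ, fibZ (2*(k:ℤ) - 3) = gg k ∧ fibZ (2*((k:ℕ)+1:ℤ) - 3) = gg (k+1) := by
    intro k
    induction k with
    | zero =>
      constructor
      · show fibZ (2*(0:ℤ) - 3) = 2
        norm_num
        rfl
      · show fibZ (2*(1:ℤ) - 3) = gg 1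
        norm_num
        rfl
    | succ i ih =>
      obtain ⟨h1, h2⟩ := ih
      refine ⟨by exact_mod_cast h2, ?_⟩
      have hgg : gg (i+2) = 3 * gg (i+1) - gg i := rfl
      match i with
      | 0 =>
        show fibZ (2*(2:ℤ) - 3) = gg 2
        norm_num
        rfl
      | 1 =>
        show fibZ (2*(3:ℤ) - 3) = gg 3
        norm_num
        rfl
      | (j+2) =>
        have e1 : 2*(((j+2:ℕ):ℤ)+1) - 3 = ((2*j+3 : ℕ) : ℤ) := by push_cast; ring
        have e2 : 2*((j+2:ℕ):ℤ) - 3 = ((2*j+1 : ℕ) : ℤ) := by push_cast; ring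
        have e3 : 2*(((j+2+1:ℕ):ℤ)+1) - 3 = ((2*j+5 : ℕ) : ℤ) := by push_cast; ring
        rw [e1, fibZ_ofNat] at h2
        rw [e2, fibZ_ofNat] at h1
        rw [e3, fibZ_ofNat, show j+2+1+1 = j+4 from by omega]
        have hgg2 : gg (j+4) = 3 * gg (j+3) - gg (j+2) := rfl
        have hfib := natfib_id (2*j+1)
        have : 2*j+1+4 = 2*j+5 := by ring
        rw [this] at hfib
        have : 2*j+1+2 = 2*j+3 := by ring
        rw [this] at hfib
        rw [hgg2, ← h2, ← h1]
        push_cast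
        push_cast at hfib
        linarith
  exact fun k => (key k).1

lemma gg_ne (k : ℕ) : ((gg k : ℚ)) ≠ 0 := by
  have := gg_pos k
  positivity

lemma main_ind (b lam : ℕ → ℚ) (hb0 : b 0 = 1) (hlam0 : lam 0 = 1)
    (hb' : ∀ m : ℕ, 1 ≤ m → b m = 3 - 1/((gg (m+1) : ℚ) * (gg m : ℚ)))
    (hlam' : ∀ m : ℕ, 1 ≤ m → lam m = 1 + 1/((gg (m+1) : ℚ))^2) :
    ∀ n k, G b lam k (n+1) =
      (TT n k : ℚ) + (if k = 0 then 0 else ((gg (k+1) : ℚ)/(gg k : ℚ)) * (TT n (k-1) : ℚ)) := by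
  have g1 : (gg 1 : ℚ) = 1 := by norm_num [gg]
  have g2 : (gg 2 : ℚ) = 1 := by norm_num [gg]
  have g3 : (gg 3 : ℚ) = 2 := by norm_num [gg]
  intro n
  induction n with
  | zero =>
    intro k
    rw [G_succ, G_zero, G_zero]
    match k with
    | 0 => simp [TT, hb0]
    | 1 => simp [TT, hlam0, G_zero, g1, g2]
    | (j+2) => simp [TT, G_zero]
  | succ m IH =>
    intro k
    rw [G_succ, IH k, IH (k+1)]
    match k with
    | 0 =>
      simp only [reduceIte, if_pos rfl]
      rw [hb0]
      have hT : TT (m+1) 0 = 2 * TT m 0 + TT m 1 := by simp [TT]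
      rw [hT]
      simp only [Nat.add_eq, if_neg (by omega : ¬ (0+1 = 0))]
      push_cast [g1, g2]
      norm_num
      ring
    | 1 =>
      norm_num
      rw [IH 0]
      have hb1 : b 1 = 2 := by rw [hb' 1 le_rfl, g1, g2]; norm_num
      have hT1 : TT (m+1) 1 = 3 * TT m 1 + TT m 2 + TT m 0 := by simp [TT]
      have hT0 : TT (m+1) 0 = 2 * TT m 0 + TT m 1 := by simp [TT]
      simp only [if_neg (by omega : ¬ (1 = 0)), if_pos rfl,
        if_neg (by omega : ¬ (1+1 = 0))]
      rw [hb1, hlam0, hT1, hT0]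
      push_cast [g1, g2, g3]
      norm_num
      ring
    | (j+2) =>
      simp only [if_neg (show ¬ (j+2 = 0) from by omega), if_neg (show ¬ (j+2+1 = 0) from by omega),
        show j+2-1 = j+1 from rfl, show j+2+1-1 = j+2 from rfl,
        show j+2+1+1 = j+4 from by omega, show j+2+1 = j+3 from by omega]
      rw [IH (j+1)]
      simp only [if_neg (show ¬ (j+1 = 0) from by omega), show j+1-1 = j from rfl,
        show j+1+1 = j+2 from by omega]
      have hbk := hb' (j+2) (by omega)
      have hlk := hlam' (j+1) (by omega)
      have hinv : (gg (j+2) : ℚ)^2 + (gg (j+3) : ℚ)^2 - 3*(gg (j+2):ℚ)*(gg (j+3):ℚ) = -1 := by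
        exact_mod_cast gg_inv (j+2)
      have hd : (gg (j+3) : ℚ) = 3*(gg (j+2):ℚ) - (gg (j+1):ℚ) := by
        exact_mod_cast congrArg (fun z : ℤ => (z : ℚ)) (show gg (j+3) = 3 * gg (j+2) - gg (j+1) from rfl)
      have he : (gg (j+4) : ℚ) = 3*(gg (j+3):ℚ) - (gg (j+2):ℚ) := by
        exact_mod_cast congrArg (fun z : ℤ => (z : ℚ)) (show gg (j+4) = 3 * gg (j+3) - gg (j+2) from rfl)
      have ha : (gg (j+1) : ℚ) = 3*(gg (j+2):ℚ) - (gg (j+3):ℚ) := by linarith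
      have hc0 : (gg (j+2) : ℚ) ≠ 0 := gg_ne _
      have hd0 : (gg (j+3) : ℚ) ≠ 0 := gg_ne _
      have ha0 : (3*(gg (j+2):ℚ) - (gg (j+3):ℚ)) ≠ 0 := by rw [← ha]; exact gg_ne _
      have hT2 : TT (m+1) (j+2) = 3 * TT m (j+2) + TT m (j+3) + TT m (j+1) := by simp [TT]
      have hT1 : TT (m+1) (j+1) = 3 * TT m (j+1) + TT m (j+2) + TT m j := by simp [TT]
      rw [hbk, hlk, hT2, hT1, he, ha]
      push_cast
      linear_combination (norm := (field_simp; ring))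
        (((TT m j : ℚ))/((gg (j+2) : ℚ) * (3*(gg (j+2):ℚ) - (gg (j+3):ℚ)))
          - ((TT m (j+2) : ℚ))/((gg (j+3):ℚ) * (gg (j+2):ℚ))) * hinv

/-- The rational number `Mot_n(b, λ)` is a positive integer for all `n ≥ 0`. -/
theorem motzkin_b_lambda_is_positive_integer
(b lam : ℕ → ℚ) (hb0 : b 0 = 1) (hlam0 : lam 0 = 1)
    (hb : ∀ m : ℕ, 1 ≤ m →
      b m = 3 - 1 / ((fibZ (2 * (m : ℤ) - 1) : ℚ) * (fibZ (2 * (m : ℤ) - 3) : ℚ)))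
    (hlam : ∀ m : ℕ, 1 ≤ m → lam m = 1 + 1 / (fibZ (2 * (m : ℤ) - 1) : ℚ) ^ 2)
    (n : ℕ) :
    ∃ m : ℕ, 0 < m ∧ motSum n b lam = (m : ℚ) := by
  have hfib1 : ∀ m : ℕ, fibZ (2 * (m : ℤ) - 1) = gg (m + 1) := by
    intro m
    have : (2 * (m:ℤ) - 1) = 2 * ((m+1 : ℕ) : ℤ) - 3 := by push_cast; ring
    rw [this, fibZ_gg]
  have hb' : ∀ m : ℕ, 1 ≤ m → b m = 3 - 1/((gg (m+1) : ℚ) * (gg m : ℚ)) := by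
    intro m hm
    rw [hb m hm, hfib1 m, fibZ_gg m]
  have hlam' : ∀ m : ℕ, 1 ≤ m → lam m = 1 + 1/((gg (m+1) : ℚ))^2 := by
    intro m hm
    rw [hlam m hm, hfib1 m]
  cases n with
  | zero =>
    refine ⟨1, one_pos, ?_⟩
    rw [motSum_eq_G, G_zero]
    norm_num
  | succ n' =>
    refine ⟨TT n' 0, TT_pos n', ?_⟩
    rw [motSum_eq_G, main_ind b lam hb0 hlam0 hb' hlam' n' 0]
    simp
end
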